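/- There exist constants Q₀ > 0 and C > 0 with the following property (key estimate for Theorem 2): for every pair of continuously differentiable functions u, v : ℝ → ℂ with u, v, u', v' square-integrable and ∫_ℝ (|u|² + |v|²) dx ≤ Q₀, one has ∫_ℝ (|u'|² + |v'|²) dx ≤ 2 R(u,v) + C, where R(u,v) = ∫_ℝ [ |u'|² + |v'|² − (i/2)(u' ū − ū' u)(|u|² + 2|v|²) + (i/2)(v' v̄ − v̄' v)(2|u|² + |v|²) − (u v̄ + ū v)(|u|² + |v|²) + 2|u|²|v|²(|u|² + |v|²) ] dx. In particular, the conserved functional R controls the H¹ norm of L²-small functions. -/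

import Mathlib

open Complex MeasureTheory

section helpers

lemma myCS {f g : ℝ → ℝ} (hf : ∀ x, 0 ≤ f x) (hg : ∀ x, 0 ≤ g x)
    (hfm : AEStronglyMeasurable f volume) (hgm : AEStronglyMeasurable g volume)
    (hf2 : Integrable (fun x => f x ^ 2)) (hg2 : Integrable (fun x => g x ^ 2)) :
    ∫ x, f x * g x ≤ Real.sqrt (∫ x, f x ^ 2) * Real.sqrt (∫ x, g x ^ 2) := by
  have hof : (ENNReal.ofReal (2:ℝ)) = 2 := by norm_num
  have h := integral_mul_le_Lp_mul_Lq_of_nonneg (μ := volume)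
    (Real.holderConjugate_iff_eq_conjExponent (by norm_num) |>.2 (by norm_num) :
      Real.HolderConjugate 2 2)
    (Filter.Eventually.of_forall hf) (Filter.Eventually.of_forall hg)
    (hof ▸ (memLp_two_iff_integrable_sq hfm).2 hf2)
    (hof ▸ (memLp_two_iff_integrable_sq hgm).2 hg2)
  have e1 : ∀ h : ℝ → ℝ, (∫ x, h x ^ (2:ℝ)) = ∫ x, h x ^ 2 := by
    intro h; congr 1; ext x
    rw [show ((2:ℝ) = ((2:ℕ):ℝ)) by norm_num, Real.rpow_natCast]
  rw [e1, e1] at h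
  refine h.trans (le_of_eq ?_)
  rw [Real.sqrt_eq_rpow, Real.sqrt_eq_rpow]

lemma sup_sq_le (u : ℝ → ℂ) (hu : ContDiff ℝ 1 u)
    (h2 : Integrable (fun x => ‖u x‖ ^ 2))
    (h2' : Integrable (fun x => ‖deriv u x‖ ^ 2)) (x : ℝ) :
    ‖u x‖ ^ 2 ≤ 2 * ∫ t, ‖u t‖ * ‖deriv u t‖ := by
  have hud : Differentiable ℝ u := hu.differentiable (by norm_num)
  have hcu : Continuous u := hu.continuous
  have hcu' : Continuous (deriv u) := (hu.iterate_deriv' 0 1).continuous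
  set g : ℝ → ℝ := fun t => ‖u t‖ ^ 2 with hg
  set G : ℝ → ℝ := fun t => 2 * (inner ℝ (u t) (deriv u t) : ℝ) with hG
  have hgd : ∀ t, HasDerivAt g (G t) t := fun t => ((hud t).hasDerivAt).norm_sq
  set B : ℝ → ℝ := fun t => 2 * (‖u t‖ * ‖deriv u t‖) with hB
  have hGB : ∀ t, |G t| ≤ B t := by
    intro t
    have h := abs_real_inner_le_norm (u t) (deriv u t)
    simp only [hG, hB]
    rw [abs_mul]
    have h2 : |(2:ℝ)| = 2 := abs_two
    rw [h2]
    exact mul_le_mul_of_nonneg_left h (by norm_num)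
  have hcB : Continuous B := by continuity
  have hcG : Continuous G := by
    exact continuous_const.mul (continuous_inner.comp (hcu.prodMk hcu'))
  have hBnn : ∀ t, 0 ≤ B t := fun t => by positivity
  have hBint : Integrable B := by
    refine Integrable.mono' (h2.add h2') hcB.aestronglyMeasurable ?_
    refine Filter.Eventually.of_forall fun t => ?_
    rw [Real.norm_of_nonneg (hBnn t)]
    simp only [hB, Pi.add_apply]
    nlinarith [sq_nonneg (‖u t‖ - ‖deriv u t‖),
      norm_nonneg (u t), norm_nonneg (deriv u t)]
  have hGint : Integrable (fun t => |G t|) := by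
    refine Integrable.mono' hBint hcG.abs.aestronglyMeasurable ?_
    exact Filter.Eventually.of_forall fun t => by
      rw [Real.norm_of_nonneg (abs_nonneg _)]; exact hGB t
  have hgle : ∀ y, g x ≤ g y + ∫ t, B t := by
    intro y
    have hint : IntervalIntegrable G volume y x := hcG.intervalIntegrable y x
    have hftc : ∫ t in y..x, G t = g x - g y :=
      intervalIntegral.integral_eq_sub_of_hasDerivAt (fun t _ => hgd t) hint
    have h1 : g x - g y ≤ ∫ t, B t := by
      rw [← hftc]
      calc ∫ t in y..x, G t ≤ |∫ t in y..x, G t| := le_abs_self _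
        _ ≤ ∫ t in Set.uIoc y x, |G t| := by
            simpa using intervalIntegral.norm_integral_le_integral_norm_uIoc
              (f := G) (a := y) (b := x) (μ := volume)
        _ ≤ ∫ t in Set.uIoc y x, B t := by
            refine setIntegral_mono_on hGint.integrableOn hBint.integrableOn
              measurableSet_uIoc (fun t _ => hGB t)
        _ ≤ ∫ t, B t :=
            setIntegral_le_integral hBint (Filter.Eventually.of_forall hBnn)
    linarith
  have key : ∀ ε > (0:ℝ), ∃ y, g y ≤ ε := by
    intro ε hε
    by_contra hcon
    push_neg at hcon
    have : Integrable (fun _ : ℝ => ε) := by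
      refine Integrable.mono' h2 aestronglyMeasurable_const ?_
      refine Filter.Eventually.of_forall fun t => ?_
      rw [Real.norm_of_nonneg hε.le]
      have := (hcon t).le
      simpa [hg] using this
    rw [integrable_const_iff] at this
    rcases this with h | h
    · exact hε.ne' h
    · simpa using h.measure_univ_lt_top
  have hfin : g x ≤ ∫ t, B t := by
    refine le_of_forall_pos_le_add fun ε hε => ?_
    obtain ⟨y, hy⟩ := key ε hε
    linarith [hgle y]
  have heq : (∫ t, B t) = 2 * ∫ t, ‖u t‖ * ‖deriv u t‖ := by
    rw [← integral_const_mul]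
  rw [← heq]
  simpa [hg] using hfin

lemma ptIm (z w : ℂ) : |(z * (starRingEnd ℂ) w).im| ≤ ‖z‖ * ‖w‖ := by
  calc |(z * (starRingEnd ℂ) w).im| ≤ ‖z * (starRingEnd ℂ) w‖ :=
        Complex.abs_im_le_norm _
    _ = ‖z‖ * ‖w‖ := by rw [norm_mul, Complex.norm_conj]

lemma ptRe (z w : ℂ) : |(z * (starRingEnd ℂ) w).re| ≤ ‖z‖ * ‖w‖ := by
  calc |(z * (starRingEnd ℂ) w).re| ≤ ‖z * (starRingEnd ℂ) w‖ :=
        Complex.abs_re_le_norm _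
    _ = ‖z‖ * ‖w‖ := by rw [norm_mul, Complex.norm_conj]

lemma sqrt_cs {a b c d : ℝ} (ha : 0 ≤ a) (hb : 0 ≤ b) (hc : 0 ≤ c) (hd : 0 ≤ d) :
    Real.sqrt a * Real.sqrt c + Real.sqrt b * Real.sqrt d
      ≤ Real.sqrt (a + b) * Real.sqrt (c + d) := by
  rw [← Real.sqrt_mul ha c, ← Real.sqrt_mul hb d, ← Real.sqrt_mul (by linarith) (c + d)]
  have key : (Real.sqrt (a*c) + Real.sqrt (b*d)) ^ 2 ≤ (a + b) * (c + d) := by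
    have e1 : Real.sqrt (a*c) ^ 2 = a*c := Real.sq_sqrt (by positivity)
    have e2 : Real.sqrt (b*d) ^ 2 = b*d := Real.sq_sqrt (by positivity)
    have e3 : Real.sqrt (a*c) * Real.sqrt (b*d) = Real.sqrt (a*d) * Real.sqrt (b*c) := by
      rw [← Real.sqrt_mul (by positivity), ← Real.sqrt_mul (by positivity)]
      ring_nf
    have e4 : 2 * (Real.sqrt (a*d) * Real.sqrt (b*c)) ≤ a*d + b*c := by
      nlinarith [sq_nonneg (Real.sqrt (a*d) - Real.sqrt (b*c)),
        Real.sq_sqrt (mul_nonneg ha hd), Real.sq_sqrt (mul_nonneg hb hc)]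
    nlinarith
  have h0 : 0 ≤ Real.sqrt (a*c) + Real.sqrt (b*d) := by positivity
  nlinarith [Real.sq_sqrt (mul_nonneg (add_nonneg ha hb) (add_nonneg hc hd)),
    Real.sqrt_nonneg ((a+b)*(c+d))]

end helpers

/-- The complex-written integrand of the higher-order conserved functional `R`. -/
noncomputable def mtmRIntegrand (u v : ℝ → ℂ) (x : ℝ) : ℂ :=
  ((‖deriv u x‖ : ℝ) : ℂ) ^ 2 + ((‖deriv v x‖ : ℝ) : ℂ) ^ 2
    - (Complex.I / 2) * (deriv u x * (starRingEnd ℂ) (u x)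
        - (starRingEnd ℂ) (deriv u x) * u x) *
      (((‖u x‖ : ℝ) : ℂ) ^ 2 + 2 * ((‖v x‖ : ℝ) : ℂ) ^ 2)
    + (Complex.I / 2) * (deriv v x * (starRingEnd ℂ) (v x)
        - (starRingEnd ℂ) (deriv v x) * v x) *
      (2 * ((‖u x‖ : ℝ) : ℂ) ^ 2 + ((‖v x‖ : ℝ) : ℂ) ^ 2)
    - (u x * (starRingEnd ℂ) (v x) + (starRingEnd ℂ) (u x) * v x) *
      (((‖u x‖ : ℝ) : ℂ) ^ 2 + ((‖v x‖ : ℝ) : ℂ) ^ 2)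
    + 2 * ((‖u x‖ : ℝ) : ℂ) ^ 2 * ((‖v x‖ : ℝ) : ℂ) ^ 2 *
      (((‖u x‖ : ℝ) : ℂ) ^ 2 + ((‖v x‖ : ℝ) : ℂ) ^ 2)

/-- The higher-order conserved functional `R` of the massive Thirring model
(its integrand is real-valued, so we take the real part of the complex integral). -/
noncomputable def mtmR (u v : ℝ → ℂ) : ℝ :=
  (∫ x : ℝ, mtmRIntegrand u v x).re

lemma re_integrand (u v : ℝ → ℂ) (x : ℝ) :
    (mtmRIntegrand u v x).re =
      ‖deriv u x‖ ^ 2 + ‖deriv v x‖ ^ 2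
      + (deriv u x * (starRingEnd ℂ) (u x)).im *
          (‖u x‖ ^ 2 + 2 * ‖v x‖ ^ 2)
      - (deriv v x * (starRingEnd ℂ) (v x)).im *
          (2 * ‖u x‖ ^ 2 + ‖v x‖ ^ 2)
      - 2 * (u x * (starRingEnd ℂ) (v x)).re *
          (‖u x‖ ^ 2 + ‖v x‖ ^ 2)
      + 2 * ‖u x‖ ^ 2 * ‖v x‖ ^ 2 *
          (‖u x‖ ^ 2 + ‖v x‖ ^ 2) := by
  simp only [mtmRIntegrand, Complex.add_re, Complex.sub_re, Complex.mul_re, Complex.mul_im,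
    Complex.I_re, Complex.I_im, Complex.div_re, Complex.div_im, Complex.conj_re, Complex.conj_im,
    Complex.ofReal_re, Complex.ofReal_im, Complex.normSq_ofNat, Complex.re_ofNat,
    Complex.im_ofNat, Complex.sub_im, Complex.add_im, ← Complex.ofReal_pow]
  ring

lemma im_integrand (u v : ℝ → ℂ) (x : ℝ) : (mtmRIntegrand u v x).im = 0 := by
  simp only [mtmRIntegrand, Complex.add_re, Complex.sub_re, Complex.mul_re, Complex.mul_im,
    Complex.I_re, Complex.I_im, Complex.div_re, Complex.div_im, Complex.conj_re, Complex.conj_im,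
    Complex.ofReal_re, Complex.ofReal_im, Complex.normSq_ofNat, Complex.re_ofNat,
    Complex.im_ofNat, Complex.sub_im, Complex.add_im, ← Complex.ofReal_pow]
  ring

set_option maxHeartbeats 4000000 in
theorem stmt18 :
    ∃ Q₀ : ℝ, 0 < Q₀ ∧ ∃ C : ℝ, 0 < C ∧
      ∀ u v : ℝ → ℂ, ContDiff ℝ 1 u → ContDiff ℝ 1 v →
        Integrable (fun x => (‖u x‖) ^ 2) →
        Integrable (fun x => (‖v x‖) ^ 2) →
        Integrable (fun x => (‖deriv u x‖) ^ 2) →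
        Integrable (fun x => (‖deriv v x‖) ^ 2) →
        (∫ x : ℝ, ((‖u x‖) ^ 2 + (‖v x‖) ^ 2)) ≤ Q₀ →
        (∫ x : ℝ, ((‖deriv u x‖) ^ 2 + (‖deriv v x‖) ^ 2))
          ≤ 2 * mtmR u v + C := by
  refine ⟨1/18, by norm_num, 1, by norm_num, ?_⟩
  intro u v hu hv hua hvb hud hvd hQ
  have hcu := hu.continuous
  have hcv := hv.continuous
  have hcu' : Continuous (deriv u) := (hu.iterate_deriv' 0 1).continuous
  have hcv' : Continuous (deriv v) := (hv.iterate_deriv' 0 1).continuous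
  have hqc : Continuous fun x => ‖u x‖ := continuous_norm.comp hcu
  have hrc : Continuous fun x => ‖v x‖ := continuous_norm.comp hcv
  have hpc : Continuous fun x => ‖deriv u x‖ := continuous_norm.comp hcu'
  have hsc : Continuous fun x => ‖deriv v x‖ := continuous_norm.comp hcv'
  set Mu := ∫ x, ‖u x‖ ^ 2 with hMuDef
  set Mv := ∫ x, ‖v x‖ ^ 2 with hMvDef
  set Du := ∫ x, ‖deriv u x‖ ^ 2 with hDuDef
  set Dv := ∫ x, ‖deriv v x‖ ^ 2 with hDvDef
  set M := ∫ x, (‖u x‖ ^ 2 + ‖v x‖ ^ 2) with hMDef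
  set D := ∫ x, (‖deriv u x‖ ^ 2 + ‖deriv v x‖ ^ 2) with hDDef
  have hMsplit : M = Mu + Mv := integral_add hua hvb
  have hDsplit : D = Du + Dv := integral_add hud hvd
  have hMu0 : 0 ≤ Mu := integral_nonneg fun x => by positivity
  have hMv0 : 0 ≤ Mv := integral_nonneg fun x => by positivity
  have hDu0 : 0 ≤ Du := integral_nonneg fun x => by positivity
  have hDv0 : 0 ≤ Dv := integral_nonneg fun x => by positivity
  have hM0 : 0 ≤ M := by rw [hMsplit]; linarith
  have hD0 : 0 ≤ D := by rw [hDsplit]; linarith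
  have hCSu : (∫ x, ‖u x‖ * ‖deriv u x‖)
      ≤ Real.sqrt Mu * Real.sqrt Du :=
    myCS (fun x => norm_nonneg _) (fun x => norm_nonneg _)
      hqc.aestronglyMeasurable hpc.aestronglyMeasurable hua hud
  have hCSv : (∫ x, ‖v x‖ * ‖deriv v x‖)
      ≤ Real.sqrt Mv * Real.sqrt Dv :=
    myCS (fun x => norm_nonneg _) (fun x => norm_nonneg _)
      hrc.aestronglyMeasurable hsc.aestronglyMeasurable hvb hvd
  set S := 2 * (Real.sqrt M * Real.sqrt D) with hSdef
  have hS0 : 0 ≤ S := by positivity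
  have hsqcs : Real.sqrt Mu * Real.sqrt Du + Real.sqrt Mv * Real.sqrt Dv
      ≤ Real.sqrt M * Real.sqrt D := by
    have h5 := sqrt_cs hMu0 hMv0 hDu0 hDv0
    rw [← hMsplit, ← hDsplit] at h5
    exact h5
  have hsup : ∀ x, ‖u x‖ ^ 2 + ‖v x‖ ^ 2 ≤ S := by
    intro x
    have h1 := sup_sq_le u hu hua hud x
    have h2 := sup_sq_le v hv hvb hvd x
    have := hCSu; have := hCSv
    rw [hSdef]; linarith
  -- the five pieces of the real part of the integrand
  set f2 : ℝ → ℝ := fun x => (deriv u x * (starRingEnd ℂ) (u x)).im *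
      (‖u x‖ ^ 2 + 2 * ‖v x‖ ^ 2) with hf2def
  set f3 : ℝ → ℝ := fun x => (deriv v x * (starRingEnd ℂ) (v x)).im *
      (2 * ‖u x‖ ^ 2 + ‖v x‖ ^ 2) with hf3def
  set f4 : ℝ → ℝ := fun x => 2 * (u x * (starRingEnd ℂ) (v x)).re *
      (‖u x‖ ^ 2 + ‖v x‖ ^ 2) with hf4def
  set f5 : ℝ → ℝ := fun x => 2 * ‖u x‖ ^ 2 * ‖v x‖ ^ 2 *
      (‖u x‖ ^ 2 + ‖v x‖ ^ 2) with hf5def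
  -- pointwise bounds
  have hb2 : ∀ x, |f2 x| ≤ (2 * S) * (‖u x‖ * ‖deriv u x‖) := by
    intro x
    have h := ptIm (deriv u x) (u x)
    have hs := hsup x
    have hbnn : (0:ℝ) ≤ ‖u x‖ ^ 2 + 2 * ‖v x‖ ^ 2 := by positivity
    rw [hf2def]
    rw [abs_mul, _root_.abs_of_nonneg hbnn]
    have him0 : (0:ℝ) ≤ |(deriv u x * (starRingEnd ℂ) (u x)).im| := abs_nonneg _
    have hq0 : (0:ℝ) ≤ ‖u x‖ := norm_nonneg _
    have hp0 : (0:ℝ) ≤ ‖deriv u x‖ := norm_nonneg _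
    have hr0 : (0:ℝ) ≤ ‖v x‖ ^ 2 := by positivity
    have haq : (0:ℝ) ≤ ‖u x‖ ^ 2 := by positivity
    nlinarith [mul_le_mul_of_nonneg_right h hbnn,
      mul_le_mul_of_nonneg_left (show ‖u x‖ ^ 2 + 2 * ‖v x‖ ^ 2 ≤ 2 * S by linarith)
        (mul_nonneg hp0 hq0)]
  have hb3 : ∀ x, |f3 x| ≤ (2 * S) * (‖v x‖ * ‖deriv v x‖) := by
    intro x
    have h := ptIm (deriv v x) (v x)
    have hs := hsup x
    have hbnn : (0:ℝ) ≤ 2 * ‖u x‖ ^ 2 + ‖v x‖ ^ 2 := by positivity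
    rw [hf3def]
    rw [abs_mul, _root_.abs_of_nonneg hbnn]
    have hq0 : (0:ℝ) ≤ ‖v x‖ := norm_nonneg _
    have hp0 : (0:ℝ) ≤ ‖deriv v x‖ := norm_nonneg _
    have hr0 : (0:ℝ) ≤ ‖u x‖ ^ 2 := by positivity
    have hbq : (0:ℝ) ≤ ‖v x‖ ^ 2 := by positivity
    nlinarith [mul_le_mul_of_nonneg_right h hbnn,
      mul_le_mul_of_nonneg_left (show 2 * ‖u x‖ ^ 2 + ‖v x‖ ^ 2 ≤ 2 * S by linarith)
        (mul_nonneg hp0 hq0)]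
  have hb4 : ∀ x, |f4 x| ≤ S * (‖u x‖ ^ 2 + ‖v x‖ ^ 2) := by
    intro x
    have h := ptRe (u x) (v x)
    have hs := hsup x
    have habnn : (0:ℝ) ≤ ‖u x‖ ^ 2 + ‖v x‖ ^ 2 := by positivity
    rw [hf4def, abs_mul, _root_.abs_of_nonneg habnn, abs_mul, _root_.abs_two]
    have hq0 : (0:ℝ) ≤ ‖u x‖ := norm_nonneg _
    have hr0 : (0:ℝ) ≤ ‖v x‖ := norm_nonneg _
    have h2 : 2 * |(u x * (starRingEnd ℂ) (v x)).re| ≤ S := by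
      nlinarith [sq_nonneg (‖u x‖ - ‖v x‖)]
    nlinarith [mul_le_mul_of_nonneg_right h2 habnn]
  have hb5 : ∀ x, |f5 x| ≤ (2 * S ^ 2) * (‖u x‖ ^ 2 + ‖v x‖ ^ 2) := by
    intro x
    have hs := hsup x
    have hq0 : (0:ℝ) ≤ ‖u x‖ ^ 2 := by positivity
    have hr0 : (0:ℝ) ≤ ‖v x‖ ^ 2 := by positivity
    have habnn : (0:ℝ) ≤ ‖u x‖ ^ 2 + ‖v x‖ ^ 2 := by positivity
    have hf5nn : (0:ℝ) ≤ f5 x := by rw [hf5def]; positivity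
    rw [_root_.abs_of_nonneg hf5nn]
    simp only [hf5def]
    have hab : ‖u x‖ ^ 2 * ‖v x‖ ^ 2 ≤ S ^ 2 := by
      have h1 : ‖u x‖ ^ 2 ≤ S := by linarith
      have h2 : ‖v x‖ ^ 2 ≤ S := by linarith
      calc ‖u x‖ ^ 2 * ‖v x‖ ^ 2 ≤ S * ‖v x‖ ^ 2 :=
            mul_le_mul_of_nonneg_right h1 hr0
        _ ≤ S * S := mul_le_mul_of_nonneg_left h2 hS0
        _ = S ^ 2 := by ring
    nlinarith [mul_le_mul_of_nonneg_right hab habnn, hq0, hr0, habnn, hS0]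
  -- continuity of the pieces
  have hconju : Continuous fun x => (starRingEnd ℂ) (u x) := Complex.continuous_conj.comp hcu
  have hconjv : Continuous fun x => (starRingEnd ℂ) (v x) := Complex.continuous_conj.comp hcv
  have hc2 : Continuous f2 := by
    rw [hf2def]
    exact (Complex.continuous_im.comp (hcu'.mul hconju)).mul
      ((hqc.pow 2).add (continuous_const.mul (hrc.pow 2)))
  have hc3 : Continuous f3 := by
    rw [hf3def]
    exact (Complex.continuous_im.comp (hcv'.mul hconjv)).mul
      ((continuous_const.mul (hqc.pow 2)).add (hrc.pow 2))
  have hc4 : Continuous f4 := by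
    rw [hf4def]
    exact (continuous_const.mul (Complex.continuous_re.comp (hcu.mul hconjv))).mul
      ((hqc.pow 2).add (hrc.pow 2))
  have hc5 : Continuous f5 := by
    rw [hf5def]
    exact ((continuous_const.mul (hqc.pow 2)).mul (hrc.pow 2)).mul
      ((hqc.pow 2).add (hrc.pow 2))
  -- integrability of products
  have hqp_int : Integrable (fun x => ‖u x‖ * ‖deriv u x‖) := by
    refine Integrable.mono' (hua.add hud) (hqc.mul hpc).aestronglyMeasurable ?_
    refine Filter.Eventually.of_forall fun x => ?_
    have hq0 : (0:ℝ) ≤ ‖u x‖ := norm_nonneg _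
    have hp0 : (0:ℝ) ≤ ‖deriv u x‖ := norm_nonneg _
    rw [Real.norm_of_nonneg (mul_nonneg hq0 hp0)]
    simp only [Pi.add_apply]
    nlinarith [sq_nonneg (‖u x‖ - ‖deriv u x‖)]
  have hrs_int : Integrable (fun x => ‖v x‖ * ‖deriv v x‖) := by
    refine Integrable.mono' (hvb.add hvd) (hrc.mul hsc).aestronglyMeasurable ?_
    refine Filter.Eventually.of_forall fun x => ?_
    have hq0 : (0:ℝ) ≤ ‖v x‖ := norm_nonneg _
    have hp0 : (0:ℝ) ≤ ‖deriv v x‖ := norm_nonneg _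
    rw [Real.norm_of_nonneg (mul_nonneg hq0 hp0)]
    simp only [Pi.add_apply]
    nlinarith [sq_nonneg (‖v x‖ - ‖deriv v x‖)]
  have hab_int : Integrable (fun x => ‖u x‖ ^ 2 + ‖v x‖ ^ 2) :=
    hua.add hvb
  -- integrability of the pieces
  have hf2int : Integrable f2 := by
    refine Integrable.mono' (hqp_int.const_mul (2 * S)) hc2.aestronglyMeasurable ?_
    exact Filter.Eventually.of_forall fun x => by
      rw [Real.norm_eq_abs]; exact hb2 x
  have hf3int : Integrable f3 := by
    refine Integrable.mono' (hrs_int.const_mul (2 * S)) hc3.aestronglyMeasurable ?_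
    exact Filter.Eventually.of_forall fun x => by
      rw [Real.norm_eq_abs]; exact hb3 x
  have hf4int : Integrable f4 := by
    refine Integrable.mono' (hab_int.const_mul S) hc4.aestronglyMeasurable ?_
    exact Filter.Eventually.of_forall fun x => by
      rw [Real.norm_eq_abs]; exact hb4 x
  have hf5int : Integrable f5 := by
    refine Integrable.mono' (hab_int.const_mul (2 * S ^ 2)) hc5.aestronglyMeasurable ?_
    exact Filter.Eventually.of_forall fun x => by
      rw [Real.norm_eq_abs]; exact hb5 x
  -- integral bounds
  have hsqMu : Real.sqrt Mu ≤ Real.sqrt M := Real.sqrt_le_sqrt (by rw [hMsplit]; linarith)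
  have hsqMv : Real.sqrt Mv ≤ Real.sqrt M := Real.sqrt_le_sqrt (by rw [hMsplit]; linarith)
  have hsqDu : Real.sqrt Du ≤ Real.sqrt D := Real.sqrt_le_sqrt (by rw [hDsplit]; linarith)
  have hsqDv : Real.sqrt Dv ≤ Real.sqrt D := Real.sqrt_le_sqrt (by rw [hDsplit]; linarith)
  have hSMD : 2 * S * (Real.sqrt M * Real.sqrt D) = 4 * M * D := by
    calc 2 * S * (Real.sqrt M * Real.sqrt D)
        = 4 * (Real.sqrt M * Real.sqrt M) * (Real.sqrt D * Real.sqrt D) := by rw [hSdef]; ring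
      _ = 4 * M * D := by rw [Real.mul_self_sqrt hM0, Real.mul_self_sqrt hD0]
  have hIf2 : |∫ x, f2 x| ≤ 4 * M * D := by
    have h1 : |∫ x, f2 x| ≤ ∫ x, |f2 x| := by
      simpa [Real.norm_eq_abs] using norm_integral_le_integral_norm (f := f2) (μ := volume)
    have h2 : (∫ x, |f2 x|) ≤ ∫ x, (2 * S) * (‖u x‖ * ‖deriv u x‖) := by
      refine integral_mono_of_nonneg (Filter.Eventually.of_forall fun x => abs_nonneg _)
        (hqp_int.const_mul (2 * S)) (Filter.Eventually.of_forall fun x => hb2 x)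
    rw [integral_const_mul] at h2
    have h3 : 2 * S * (∫ x, ‖u x‖ * ‖deriv u x‖)
        ≤ 2 * S * (Real.sqrt M * Real.sqrt D) := by
      apply mul_le_mul_of_nonneg_left _ (by linarith)
      calc (∫ x, ‖u x‖ * ‖deriv u x‖) ≤ Real.sqrt Mu * Real.sqrt Du := hCSu
        _ ≤ Real.sqrt M * Real.sqrt D :=
            mul_le_mul hsqMu hsqDu (Real.sqrt_nonneg _) (Real.sqrt_nonneg _)
    linarith [hSMD ▸ h3]
  have hIf3 : |∫ x, f3 x| ≤ 4 * M * D := by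
    have h1 : |∫ x, f3 x| ≤ ∫ x, |f3 x| := by
      simpa [Real.norm_eq_abs] using norm_integral_le_integral_norm (f := f3) (μ := volume)
    have h2 : (∫ x, |f3 x|) ≤ ∫ x, (2 * S) * (‖v x‖ * ‖deriv v x‖) := by
      refine integral_mono_of_nonneg (Filter.Eventually.of_forall fun x => abs_nonneg _)
        (hrs_int.const_mul (2 * S)) (Filter.Eventually.of_forall fun x => hb3 x)
    rw [integral_const_mul] at h2
    have h3 : 2 * S * (∫ x, ‖v x‖ * ‖deriv v x‖)
        ≤ 2 * S * (Real.sqrt M * Real.sqrt D) := by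
      apply mul_le_mul_of_nonneg_left _ (by linarith)
      calc (∫ x, ‖v x‖ * ‖deriv v x‖) ≤ Real.sqrt Mv * Real.sqrt Dv := hCSv
        _ ≤ Real.sqrt M * Real.sqrt D :=
            mul_le_mul hsqMv hsqDv (Real.sqrt_nonneg _) (Real.sqrt_nonneg _)
    linarith [hSMD ▸ h3]
  have hIf4 : |∫ x, f4 x| ≤ M ^ 2 + M * D := by
    have h1 : |∫ x, f4 x| ≤ ∫ x, |f4 x| := by
      simpa [Real.norm_eq_abs] using norm_integral_le_integral_norm (f := f4) (μ := volume)
    have h2 : (∫ x, |f4 x|) ≤ ∫ x, S * (‖u x‖ ^ 2 + ‖v x‖ ^ 2) := by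
      refine integral_mono_of_nonneg (Filter.Eventually.of_forall fun x => abs_nonneg _)
        (hab_int.const_mul S) (Filter.Eventually.of_forall fun x => hb4 x)
    rw [integral_const_mul, ← hMDef] at h2
    have h3 : S * M ≤ M ^ 2 + M * D := by
      rw [hSdef]
      nlinarith [sq_nonneg (Real.sqrt M * (Real.sqrt M - Real.sqrt D)),
        Real.sq_sqrt hM0, Real.sq_sqrt hD0, Real.sqrt_nonneg M, Real.sqrt_nonneg D]
    linarith
  have hIf5 : 0 ≤ ∫ x, f5 x := by
    refine integral_nonneg fun x => ?_
    rw [hf5def]; positivity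
  -- identify mtmR with the split integral
  have hval : ∀ x, mtmRIntegrand u v x = (((mtmRIntegrand u v x).re : ℝ) : ℂ) := by
    intro x
    exact Complex.ext (by simp) (by simp [im_integrand])
  have hDint : Integrable (fun x => ‖deriv u x‖ ^ 2 + ‖deriv v x‖ ^ 2) :=
    hud.add hvd
  have hefun : (fun x => (mtmRIntegrand u v x).re) = fun x =>
      (‖deriv u x‖ ^ 2 + ‖deriv v x‖ ^ 2) + f2 x - f3 x - f4 x + f5 x := by
    funext x
    rw [re_integrand u v x, hf2def, hf3def, hf4def, hf5def]
  have hI2 : Integrable (fun x => (‖deriv u x‖ ^ 2 + ‖deriv v x‖ ^ 2)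
      + f2 x) := hDint.add hf2int
  have hI3 : Integrable (fun x => (‖deriv u x‖ ^ 2 + ‖deriv v x‖ ^ 2)
      + f2 x - f3 x) := hI2.sub hf3int
  have hI4 : Integrable (fun x => (‖deriv u x‖ ^ 2 + ‖deriv v x‖ ^ 2)
      + f2 x - f3 x - f4 x) := hI3.sub hf4int
  have hreint : Integrable (fun x => (mtmRIntegrand u v x).re) := by
    rw [hefun]; exact hI4.add hf5int
  have hcint : Integrable (fun x => mtmRIntegrand u v x) := by
    rw [show (fun x => mtmRIntegrand u v x) = fun x => (((mtmRIntegrand u v x).re : ℝ) : ℂ) from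
      funext hval]
    exact hreint.ofReal
  have hmtmR : mtmR u v = ∫ x, (mtmRIntegrand u v x).re := by
    simp only [mtmR]
    exact (integral_re hcint).symm
  have hsplit : (∫ x, (mtmRIntegrand u v x).re) = D + (∫ x, f2 x) - (∫ x, f3 x)
      - (∫ x, f4 x) + (∫ x, f5 x) := by
    rw [hefun]
    rw [integral_add hI4 hf5int, integral_sub hI3 hf4int, integral_sub hI2 hf3int,
      integral_add hDint hf2int, ← hDDef]
  have hmR : mtmR u v = D + (∫ x, f2 x) - (∫ x, f3 x) - (∫ x, f4 x) + (∫ x, f5 x) := by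
    rw [hmtmR, hsplit]
  -- final arithmetic
  have habs2 : -(4 * M * D) ≤ ∫ x, f2 x := by
    have := abs_le.1 hIf2; linarith [this.1]
  have habs3 : (∫ x, f3 x) ≤ 4 * M * D := (abs_le.1 hIf3).2
  have habs4 : (∫ x, f4 x) ≤ M ^ 2 + M * D := (abs_le.1 hIf4).2
  have h9 : 9 * (M * D) ≤ (1/2) * D := by nlinarith [mul_nonneg (sub_nonneg.2 hQ) hD0]
  have hM2 : M ^ 2 ≤ 1/2 := by nlinarith
  linarith [hmR, habs2, habs3, habs4, hIf5]
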